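/- Let M ⊂ ℝ^d be positively invariant for a control-affine system. An invariant control set C ⊂ M is closed relative to M provided that for every x ∈ ∂C ∩ M the reachable set O⁺(x) has nonempty interior. In particular, an invariant control set C is closed if for every x ∈ ∂C the set O⁺(x) has nonempty interior. -/

import Mathlib

open MeasureTheory Set Topology

/-- A control-affine system `ẋ = f₀(x) + ∑ vᵢ(t) fᵢ(x)` on `ℝ^d` with Lipschitz
continuous vector fields and compact control range `V ⊆ ℝ^m`.  The (unique, global)
solutions are bundled as the data `φ` together with their defining properties. -/
structure CAS (d m : ℕ) where
  /-- the drift vector field -/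
  f0 : (Fin d → ℝ) → (Fin d → ℝ)
  /-- the control vector fields -/
  f : Fin m → (Fin d → ℝ) → (Fin d → ℝ)
  /-- the control range -/
  V : Set (Fin m → ℝ)
  lip0 : ∃ K, LipschitzWith K f0
  lip : ∀ i, ∃ K, LipschitzWith K (f i)
  V_compact : IsCompact V
  /-- the solution map: `φ x v t` is the solution at time `t` starting at `x` with control `v` -/
  φ : (Fin d → ℝ) → (ℝ → (Fin m → ℝ)) → ℝ → (Fin d → ℝ)
  φ_init : ∀ x v, φ x v 0 = x
  φ_cont : ∀ x v, Continuous (φ x v)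
  /-- solutions are (Carathéodory) solutions of the ODE -/
  φ_sol : ∀ (x : Fin d → ℝ) (v : ℝ → (Fin m → ℝ)), Measurable v → (∀ t, v t ∈ V) →
    ∀ t, 0 ≤ t →
      φ x v t = x + ∫ s in (0:ℝ)..t, (f0 (φ x v s) + ∑ i, v s i • f (i) (φ x v s))

namespace CAS

variable {d m : ℕ}

/-- the set of admissible controls -/
def ctrl (S : CAS d m) : Set (ℝ → (Fin m → ℝ)) :=
  {v | Measurable v ∧ ∀ t, v t ∈ S.V}

/-- a control is piecewise constant if it has only finitely many discontinuities on
every bounded interval, i.e. it is constant between the members of a sequence of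
switching times tending to infinity -/
def PiecewiseConst (v : ℝ → (Fin m → ℝ)) : Prop :=
  ∃ τ : ℕ → ℝ, τ 0 = 0 ∧ StrictMono τ ∧ Filter.Tendsto τ Filter.atTop Filter.atTop ∧
    ∀ n, ∀ t ∈ Ico (τ n) (τ (n + 1)), v t = v (τ n)

/-- the reachable set from `x` -/
def reach (S : CAS d m) (x : Fin d → ℝ) : Set (Fin d → ℝ) :=
  {y | ∃ v ∈ S.ctrl, ∃ t ≥ (0:ℝ), S.φ x v t = y}

/-- the set reachable from `x` with piecewise constant controls -/
def reachPC (S : CAS d m) (x : Fin d → ℝ) : Set (Fin d → ℝ) :=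
  {y | ∃ v ∈ S.ctrl, PiecewiseConst v ∧ ∃ t ≥ (0:ℝ), S.φ x v t = y}

/-- the reachable set from `x` up to time `T` -/
def reachLe (S : CAS d m) (T : ℝ) (x : Fin d → ℝ) : Set (Fin d → ℝ) :=
  {y | ∃ v ∈ S.ctrl, ∃ t ∈ Icc (0:ℝ) T, S.φ x v t = y}

/-- the controllable set to `x` up to time `T` -/
def contrLe (S : CAS d m) (T : ℝ) (x : Fin d → ℝ) : Set (Fin d → ℝ) :=
  {y | ∃ v ∈ S.ctrl, ∃ t ∈ Icc (0:ℝ) T, S.φ y v t = x}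

/-- positive invariance of a set -/
def posInv (S : CAS d m) (M : Set (Fin d → ℝ)) : Prop :=
  ∀ x ∈ M, ∀ v ∈ S.ctrl, ∀ t ≥ (0:ℝ), S.φ x v t ∈ M

/-- invariance of a set -/
def inv (S : CAS d m) (M : Set (Fin d → ℝ)) : Prop :=
  ∀ t ≥ (0:ℝ), {y | ∃ x ∈ M, ∃ v ∈ S.ctrl, S.φ x v t = y} = M

/-- the two defining properties (i) controlled invariance and (ii) approximate
reachability of a control set -/
def controlSetProps (S : CAS d m) (D : Set (Fin d → ℝ)) : Prop :=
  (∀ x ∈ D, ∃ v ∈ S.ctrl, ∀ t ≥ (0:ℝ), S.φ x v t ∈ D) ∧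
  (∀ x ∈ D, D ⊆ closure (S.reach x))

/-- a control set: a maximal nonempty set with the properties `controlSetProps` -/
def isControlSet (S : CAS d m) (D : Set (Fin d → ℝ)) : Prop :=
  D.Nonempty ∧ S.controlSetProps D ∧
  ∀ D', D ⊆ D' → S.controlSetProps D' → D' = D

/-- an invariant control set -/
def isInvControlSet (S : CAS d m) (C : Set (Fin d → ℝ)) : Prop :=
  S.isControlSet C ∧ ∀ x ∈ C, closure C = closure (S.reach x)

/-- local accessibility at a point -/
def locAccAt (S : CAS d m) (x : Fin d → ℝ) : Prop :=
  ∀ T > (0:ℝ), ∀ N ∈ 𝓝 x,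
    (interior (S.reachLe T x) ∩ N).Nonempty ∧ (interior (S.contrLe T x) ∩ N).Nonempty

/-- local accessibility on a set -/
def locAccOn (S : CAS d m) (M : Set (Fin d → ℝ)) : Prop :=
  ∀ x ∈ M, S.locAccAt x

/-- the domain of attraction of a set -/
def domAttr (S : CAS d m) (C : Set (Fin d → ℝ)) : Set (Fin d → ℝ) :=
  {x | (closure (S.reach x) ∩ C).Nonempty}

/-- the strict domain of attraction of an invariant control set -/
def domAttrStrict (S : CAS d m) (C : Set (Fin d → ℝ)) : Set (Fin d → ℝ) :=
  {x | (closure (S.reach x) ∩ C).Nonempty ∧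
    ∀ C', S.isInvControlSet C' → (closure (S.reach x) ∩ C').Nonempty → C' = C}

end CAS

variable {d m : ℕ}

/-- the right-hand side vector field of the control system -/
noncomputable def FF (S : CAS d m) (v : ℝ → (Fin m → ℝ)) (s : ℝ) (y : Fin d → ℝ) : Fin d → ℝ :=
  S.f0 y + ∑ i, v s i • S.f i y

lemma f_cont (S : CAS d m) (i : Fin m) : Continuous (S.f i) :=
  (S.lip i).choose_spec.continuous

lemma f0_cont (S : CAS d m) : Continuous S.f0 := S.lip0.choose_spec.continuous

/-- bounds: `R` for controls, `L` a common Lipschitz constant for the fields -/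
lemma exists_setup (S : CAS d m) : ∃ R L : ℝ, 0 ≤ R ∧ 0 ≤ L ∧
    (∀ u ∈ S.V, ∀ i, |u i| ≤ R) ∧
    (∀ v ∈ S.ctrl, ∀ s y z, ‖FF S v s y - FF S v s z‖ ≤ L * ‖y - z‖) := by
  obtain ⟨C, hC⟩ := S.V_compact.isBounded.exists_norm_le
  obtain ⟨K0, hK0⟩ := S.lip0
  choose K hK using S.lip
  set R : ℝ := max C 0 with hR
  refine ⟨R, (K0:ℝ) + R * ∑ i, (K i : ℝ), le_max_right _ _, ?_, ?_, ?_⟩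
  · have : (0:ℝ) ≤ R * ∑ i, (K i : ℝ) :=
      mul_nonneg (le_max_right _ _) (Finset.sum_nonneg fun i _ => (K i).coe_nonneg)
    positivity
  · intro u hu i
    calc |u i| = ‖u i‖ := rfl
      _ ≤ ‖u‖ := norm_le_pi_norm u i
      _ ≤ C := hC u hu
      _ ≤ R := le_max_left _ _
  · intro v hv s y z
    have hvR : ∀ i, |v s i| ≤ R := fun i => by
      calc |v s i| = ‖v s i‖ := rfl
        _ ≤ ‖v s‖ := norm_le_pi_norm _ i
        _ ≤ C := hC _ (hv.2 s)
        _ ≤ R := le_max_left _ _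
    have hsplit : FF S v s y - FF S v s z
        = (S.f0 y - S.f0 z) + ∑ i, v s i • (S.f i y - S.f i z) := by
      simp only [FF, smul_sub, Finset.sum_sub_distrib]
      abel
    rw [hsplit]
    have h0 : ‖S.f0 y - S.f0 z‖ ≤ (K0 : ℝ) * ‖y - z‖ := by
      simpa [dist_eq_norm] using hK0.dist_le_mul y z
    have hterm : ∀ i : Fin m, ‖v s i • (S.f i y - S.f i z)‖ ≤ R * ((K i : ℝ) * ‖y - z‖) := by
      intro i
      rw [norm_smul]
      have h1 : ‖S.f i y - S.f i z‖ ≤ (K i : ℝ) * ‖y - z‖ := by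
        simpa [dist_eq_norm] using (hK i).dist_le_mul y z
      have h2 : ‖(v s i : ℝ)‖ ≤ R := hvR i
      exact mul_le_mul h2 h1 (norm_nonneg _) (le_max_right _ _)
    calc ‖(S.f0 y - S.f0 z) + ∑ i, v s i • (S.f i y - S.f i z)‖
        ≤ ‖S.f0 y - S.f0 z‖ + ‖∑ i, v s i • (S.f i y - S.f i z)‖ := norm_add_le _ _
      _ ≤ (K0 : ℝ) * ‖y - z‖ + ∑ i, ‖v s i • (S.f i y - S.f i z)‖ :=
          add_le_add h0 (norm_sum_le _ _)
      _ ≤ (K0 : ℝ) * ‖y - z‖ + ∑ i, R * ((K i : ℝ) * ‖y - z‖) :=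
          add_le_add le_rfl (Finset.sum_le_sum fun i _ => hterm i)
      _ = ((K0 : ℝ) + R * ∑ i, (K i : ℝ)) * ‖y - z‖ := by
          rw [Finset.sum_congr rfl (fun i _ => (mul_assoc R _ _).symm) ]
          rw [← Finset.sum_mul, ← Finset.mul_sum]
          ring

lemma intble_of_meas_bdd {E : Type*} [NormedAddCommGroup E] (f : ℝ → E) (C : ℝ) (a b : ℝ)
    (hm : AEStronglyMeasurable f volume)
    (hb : ∀ s ∈ Set.uIoc a b, ‖f s‖ ≤ C) : IntervalIntegrable f volume a b := by
  rw [intervalIntegrable_iff]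
  have : Fact (volume (Set.uIoc a b) < ⊤) := ⟨measure_Ioc_lt_top⟩
  apply MeasureTheory.Integrable.mono' (integrable_const C) hm.restrict
  exact (ae_restrict_iff' measurableSet_uIoc).2 (Filter.Eventually.of_forall hb)

lemma FF_intble (S : CAS d m) {R : ℝ} (hR0 : 0 ≤ R) (hR : ∀ u ∈ S.V, ∀ i, |u i| ≤ R)
    {v : ℝ → (Fin m → ℝ)} (hv : v ∈ S.ctrl) {u : ℝ → Fin d → ℝ} (hu : Continuous u)
    (a b : ℝ) : IntervalIntegrable (fun s => FF S v s (u s)) volume a b := by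
  have hmeas : Measurable (fun s => FF S v s (u s)) := by
    apply Measurable.add
    · exact (f0_cont S).measurable.comp hu.measurable
    · apply Finset.measurable_sum
      intro i _
      exact ((measurable_pi_apply i).comp hv.1).smul ((f_cont S i).measurable.comp hu.measurable)
  have hcf : ∀ i : Fin m, ∃ Ci, ∀ s ∈ Set.uIcc a b, ‖S.f i (u s)‖ ≤ Ci := fun i =>
    isCompact_uIcc.exists_bound_of_continuousOn ((f_cont S i).comp hu).continuousOn
  choose Cf hCf using hcf
  obtain ⟨C0, hC0⟩ :=
    isCompact_uIcc.exists_bound_of_continuousOn ((f0_cont S).comp hu).continuousOn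
  apply intble_of_meas_bdd _ (C0 + ∑ i, R * Cf i) a b hmeas.aestronglyMeasurable
  intro s hs
  have hs' : s ∈ Set.uIcc a b := Set.uIoc_subset_uIcc hs
  have : ‖FF S v s (u s)‖ ≤ ‖S.f0 (u s)‖ + ∑ i, ‖v s i • S.f i (u s)‖ :=
    (norm_add_le _ _).trans (add_le_add le_rfl (norm_sum_le _ _))
  refine this.trans (add_le_add (hC0 s hs') (Finset.sum_le_sum fun i _ => ?_))
  rw [norm_smul]
  exact mul_le_mul (hR _ (hv.2 s) i) (hCf i s hs') (norm_nonneg _) hR0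
lemma my_gronwall {g : ℝ → ℝ} (hg : Continuous g) {a L T : ℝ}
    (hL : 0 ≤ L)
    (h : ∀ t ∈ Set.Icc (0:ℝ) T, g t ≤ a + L * ∫ s in (0:ℝ)..t, g s) :
    ∀ t ∈ Set.Icc (0:ℝ) T, g t ≤ a * Real.exp (L * t) := by
  intro t ht
  set G : ℝ → ℝ := fun u => ∫ s in (0:ℝ)..u, g s with hGdef
  have hGd : ∀ u : ℝ, HasDerivAt G (g u) u := fun u =>
    intervalIntegral.integral_hasDerivAt_right (hg.intervalIntegrable 0 u)
      (hg.stronglyMeasurable.stronglyMeasurableAtFilter) hg.continuousAt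
  set H : ℝ → ℝ := fun u => (a + L * G u) * Real.exp (-L * u) with hHdef
  have hHd : ∀ u : ℝ, HasDerivAt H
      ((L * g u) * Real.exp (-L * u) + (a + L * G u) * (Real.exp (-L * u) * (-L))) u := by
    intro u
    have he : HasDerivAt (fun u : ℝ => Real.exp (-L * u)) (Real.exp (-L * u) * (-L)) u := by
      simpa using (((hasDerivAt_id u).const_mul (-L)).exp)
    exact ((hGd u).const_mul L |>.const_add a).mul he
  have hHc : Continuous H := by
    rw [continuous_iff_continuousAt]; exact fun u => (hHd u).continuousAt
  have hanti : AntitoneOn H (Set.Icc 0 T) := by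
    apply antitoneOn_of_deriv_nonpos (convex_Icc 0 T) hHc.continuousOn
      (fun u _ => (hHd u).differentiableAt.differentiableWithinAt)
    intro u hu
    rw [interior_Icc] at hu
    rw [(hHd u).deriv]
    have hgu := h u ⟨hu.1.le, hu.2.le⟩
    have hE := Real.exp_pos (-L * u)
    nlinarith [mul_nonneg hL hE.le]
  have hH0 : H 0 = a := by
    simp [hHdef, hGdef, intervalIntegral.integral_same]
  have hHt : H t ≤ a := hH0 ▸ hanti (Set.left_mem_Icc.2 (ht.1.trans ht.2)) ht ht.1
  have hE := Real.exp_pos (-L * t)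
  have h2 : a + L * G t ≤ a * Real.exp (L * t) := by
    have : (a + L * G t) * Real.exp (-L * t) ≤ a := hHt
    have h3 : Real.exp (-L * t) * Real.exp (L * t) = 1 := by
      rw [← Real.exp_add]; ring_nf; exact Real.exp_zero
    calc a + L * G t = ((a + L * G t) * Real.exp (-L * t)) * Real.exp (L * t) := by
          rw [mul_assoc, h3, mul_one]
      _ ≤ a * Real.exp (L * t) := mul_le_mul_of_nonneg_right this (Real.exp_pos _).le
  exact (h t ht).trans h2

lemma comparison (S : CAS d m) {R L : ℝ} (hR0 : 0 ≤ R) (hL0 : 0 ≤ L)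
    (hR : ∀ u ∈ S.V, ∀ i, |u i| ≤ R)
    (hLip : ∀ v ∈ S.ctrl, ∀ s y z, ‖FF S v s y - FF S v s z‖ ≤ L * ‖y - z‖)
    {u₁ u₂ : ℝ → Fin d → ℝ} {v₁ v₂ : ℝ → Fin m → ℝ}
    (hv₁ : v₁ ∈ S.ctrl) (hv₂ : v₂ ∈ S.ctrl)
    (hu₁ : Continuous u₁) (hu₂ : Continuous u₂)
    {T : ℝ}
    (hvv : ∀ s ∈ Set.Icc (0:ℝ) T, v₁ s = v₂ s)
    (heq₁ : ∀ t ∈ Set.Icc (0:ℝ) T, u₁ t = u₁ 0 + ∫ s in (0:ℝ)..t, FF S v₁ s (u₁ s))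
    (heq₂ : ∀ t ∈ Set.Icc (0:ℝ) T, u₂ t = u₂ 0 + ∫ s in (0:ℝ)..t, FF S v₂ s (u₂ s)) :
    ∀ t ∈ Set.Icc (0:ℝ) T, ‖u₁ t - u₂ t‖ ≤ ‖u₁ 0 - u₂ 0‖ * Real.exp (L * t) := by
  have hgc : Continuous (fun s => ‖u₁ s - u₂ s‖) := (hu₁.sub hu₂).norm
  apply my_gronwall hgc hL0
  intro t ht
  have hI₁ := FF_intble S hR0 hR hv₁ hu₁ 0 t
  have hI₂ := FF_intble S hR0 hR hv₂ hu₂ 0 t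
  have key : u₁ t - u₂ t = (u₁ 0 - u₂ 0)
      + ∫ s in (0:ℝ)..t, (FF S v₁ s (u₁ s) - FF S v₂ s (u₂ s)) := by
    rw [intervalIntegral.integral_sub hI₁ hI₂, heq₁ t ht, heq₂ t ht]
    abel
  rw [key]
  have h1 : ‖(u₁ 0 - u₂ 0) + ∫ s in (0:ℝ)..t, (FF S v₁ s (u₁ s) - FF S v₂ s (u₂ s))‖
      ≤ ‖u₁ 0 - u₂ 0‖ + ‖∫ s in (0:ℝ)..t, (FF S v₁ s (u₁ s) - FF S v₂ s (u₂ s))‖ :=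
    norm_add_le _ _
  refine h1.trans (add_le_add le_rfl ?_)
  calc ‖∫ s in (0:ℝ)..t, (FF S v₁ s (u₁ s) - FF S v₂ s (u₂ s))‖
      ≤ ∫ s in (0:ℝ)..t, ‖FF S v₁ s (u₁ s) - FF S v₂ s (u₂ s)‖ :=
        intervalIntegral.norm_integral_le_integral_norm ht.1
    _ ≤ ∫ s in (0:ℝ)..t, L * ‖u₁ s - u₂ s‖ := by
        apply intervalIntegral.integral_mono_on ht.1 (hI₁.sub hI₂).norm
          ((hgc.const_smul L).intervalIntegrable 0 t)
        intro s hs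
        have hFF : FF S v₁ s (u₁ s) = FF S v₂ s (u₁ s) := by
          simp only [FF, hvv s ⟨hs.1, hs.2.trans ht.2⟩]
        rw [hFF, Pi.smul_apply, smul_eq_mul]
        exact hLip v₂ hv₂ s (u₁ s) (u₂ s)
    _ = L * ∫ s in (0:ℝ)..t, ‖u₁ s - u₂ s‖ := intervalIntegral.integral_const_mul _ _

lemma phi_eq (S : CAS d m) {v : ℝ → Fin m → ℝ} (hv : v ∈ S.ctrl) (x : Fin d → ℝ)
    {t : ℝ} (ht : 0 ≤ t) :
    S.φ x v t = S.φ x v 0 + ∫ s in (0:ℝ)..t, FF S v s (S.φ x v s) := by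
  rw [S.φ_init]
  exact S.φ_sol x v hv.1 hv.2 t ht

/-- continuity of solutions with respect to the initial point -/
lemma phi_dist (S : CAS d m) {R L : ℝ} (hR0 : 0 ≤ R) (hL0 : 0 ≤ L)
    (hR : ∀ u ∈ S.V, ∀ i, |u i| ≤ R)
    (hLip : ∀ v ∈ S.ctrl, ∀ s y z, ‖FF S v s y - FF S v s z‖ ≤ L * ‖y - z‖)
    {v : ℝ → Fin m → ℝ} (hv : v ∈ S.ctrl) (x y : Fin d → ℝ) {t : ℝ} (ht : 0 ≤ t) :
    ‖S.φ x v t - S.φ y v t‖ ≤ ‖x - y‖ * Real.exp (L * t) := by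
  have := comparison S hR0 hL0 hR hLip hv hv (S.φ_cont x v) (S.φ_cont y v) (T := t)
    (fun s _ => rfl) (fun t' ht' => phi_eq S hv x ht'.1) (fun t' ht' => phi_eq S hv y ht'.1)
    t ⟨ht, le_refl t⟩
  simpa [S.φ_init] using this

/-- concatenation: anything reachable from a reachable point is reachable -/
lemma reach_trans (S : CAS d m) {x y : Fin d → ℝ} (hy : y ∈ S.reach x) :
    S.reach y ⊆ S.reach x := by
  obtain ⟨R, L, hR0, hL0, hR, hLip⟩ := exists_setup S
  obtain ⟨v₁, hv₁, t₁, ht₁, h1⟩ := hy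
  rintro z ⟨v₂, hv₂, t₂, ht₂, h2⟩
  set w : ℝ → Fin m → ℝ := fun t => if t < t₁ then v₁ t else v₂ (t - t₁) with hwdef
  have hw : w ∈ S.ctrl := by
    constructor
    · exact Measurable.ite (measurableSet_lt measurable_id measurable_const) hv₁.1
        (hv₂.1.comp (measurable_id.sub measurable_const))
    · intro t
      by_cases h : t < t₁
      · simpa [hwdef, h] using hv₁.2 t
      · simpa [hwdef, h] using hv₂.2 (t - t₁)
  -- Step 1: the trajectories agree up to time t₁
  have hstep1 : ∀ t, 0 ≤ t → t < t₁ → S.φ x w t = S.φ x v₁ t := by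
    intro t ht htl
    have hcomp := comparison S hR0 hL0 hR hLip hw hv₁ (S.φ_cont x w) (S.φ_cont x v₁) (T := t)
      (fun s hs => if_pos (lt_of_le_of_lt hs.2 htl))
      (fun t' ht' => phi_eq S hw x ht'.1) (fun t' ht' => phi_eq S hv₁ x ht'.1)
      t ⟨ht, le_refl t⟩
    rw [S.φ_init, S.φ_init, sub_self, norm_zero, zero_mul] at hcomp
    exact sub_eq_zero.mp (norm_le_zero_iff.mp hcomp)
  have ht1 : S.φ x w t₁ = y := by
    rcases eq_or_lt_of_le ht₁ with h0 | hpos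
    · rw [← h1, ← h0, S.φ_init, S.φ_init]
    · have hlim₁ : Filter.Tendsto (S.φ x w) (nhdsWithin t₁ (Set.Iio t₁))
          (nhds (S.φ x w t₁)) := ((S.φ_cont x w).tendsto t₁).mono_left nhdsWithin_le_nhds
      have hlim₂ : Filter.Tendsto (S.φ x v₁) (nhdsWithin t₁ (Set.Iio t₁))
          (nhds (S.φ x v₁ t₁)) := ((S.φ_cont x v₁).tendsto t₁).mono_left nhdsWithin_le_nhds
      have hev : ∀ᶠ t in nhdsWithin t₁ (Set.Iio t₁), S.φ x w t = S.φ x v₁ t := by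
        filter_upwards [Ioo_mem_nhdsLT_of_mem (⟨hpos, le_refl t₁⟩ : t₁ ∈ Set.Ioc 0 t₁)]
          with t ht
        exact hstep1 t ht.1.le ht.2
      have := tendsto_nhds_unique (hlim₁.congr' hev) hlim₂
      rw [this, h1]
  -- Step 2: the shifted trajectory solves the equation with control v₂
  set ψ : ℝ → Fin d → ℝ := fun t => S.φ x w (t₁ + t) with hψdef
  have hψc : Continuous ψ := (S.φ_cont x w).comp (continuous_const.add continuous_id)
  have hψ0 : ψ 0 = y := by simpa [hψdef] using ht1
  have hψeq : ∀ t, 0 ≤ t → ψ t = ψ 0 + ∫ s in (0:ℝ)..t, FF S v₂ s (ψ s) := by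
    intro t ht
    rw [hψ0]
    have e1 := phi_eq S hw x (show (0:ℝ) ≤ t₁ + t by linarith)
    have e0 := phi_eq S hw x ht₁
    rw [S.φ_init] at e1 e0
    have hadd : (∫ s in (0:ℝ)..t₁, FF S w s (S.φ x w s))
        + ∫ s in t₁..(t₁ + t), FF S w s (S.φ x w s)
        = ∫ s in (0:ℝ)..(t₁ + t), FF S w s (S.φ x w s) :=
      intervalIntegral.integral_add_adjacent_intervals
        (FF_intble S hR0 hR hw (S.φ_cont x w) 0 t₁)
        (FF_intble S hR0 hR hw (S.φ_cont x w) t₁ (t₁ + t))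
    have e3 : ∫ s in t₁..(t₁ + t), FF S w s (S.φ x w s)
        = ∫ s in (0:ℝ)..t, FF S w (t₁ + s) (S.φ x w (t₁ + s)) := by
      rw [intervalIntegral.integral_comp_add_left (fun s => FF S w s (S.φ x w s)) t₁]
      norm_num
    have e4 : ∫ s in (0:ℝ)..t, FF S w (t₁ + s) (S.φ x w (t₁ + s))
        = ∫ s in (0:ℝ)..t, FF S v₂ s (ψ s) := by
      apply intervalIntegral.integral_congr
      intro s hs
      rw [Set.uIcc_of_le ht] at hs
      have hns : ¬ (t₁ + s < t₁) := by linarith [hs.1]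
      simp only [FF, hψdef, hwdef, if_neg hns, add_sub_cancel_left]
    calc ψ t = x + ∫ s in (0:ℝ)..(t₁ + t), FF S w s (S.φ x w s) := e1
      _ = (x + ∫ s in (0:ℝ)..t₁, FF S w s (S.φ x w s))
            + ∫ s in t₁..(t₁ + t), FF S w s (S.φ x w s) := by rw [← hadd]; abel
      _ = y + ∫ s in (0:ℝ)..t, FF S v₂ s (ψ s) := by rw [← e0, ht1, e3, e4]
  -- Step 3: compare with the trajectory from y
  have hfin := comparison S hR0 hL0 hR hLip hv₂ hv₂ hψc (S.φ_cont y v₂) (T := t₂)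
    (fun s _ => rfl) (fun t' ht' => hψeq t' ht'.1)
    (fun t' ht' => phi_eq S hv₂ y ht'.1) t₂ ⟨ht₂, le_refl t₂⟩
  rw [hψ0, S.φ_init, sub_self, norm_zero, zero_mul] at hfin
  have : ψ t₂ = S.φ y v₂ t₂ := sub_eq_zero.mp (norm_le_zero_iff.mp hfin)
  exact ⟨w, hw, t₁ + t₂, by linarith, by rw [← h2, ← this]⟩

/-- solutions starting in the closure of an invariant control set stay in it -/
lemma reach_closure (S : CAS d m) (C : Set (Fin d → ℝ)) (hC : S.isInvControlSet C)
    {x : Fin d → ℝ} (hx : x ∈ closure C) : S.reach x ⊆ closure C := by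
  obtain ⟨R, L, hR0, hL0, hR, hLip⟩ := exists_setup S
  rintro z ⟨v, hv, t, ht, rfl⟩
  rw [Metric.mem_closure_iff]
  intro ε hε
  have hE : (0:ℝ) < Real.exp (L * t) := Real.exp_pos _
  obtain ⟨c, hcC, hdist⟩ := Metric.mem_closure_iff.mp hx (ε / (2 * Real.exp (L * t)))
    (by positivity)
  have h1 : dist (S.φ x v t) (S.φ c v t) < ε / 2 := by
    rw [dist_eq_norm]
    calc ‖S.φ x v t - S.φ c v t‖ ≤ ‖x - c‖ * Real.exp (L * t) :=
        phi_dist S hR0 hL0 hR hLip hv x c ht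
      _ < (ε / (2 * Real.exp (L * t))) * Real.exp (L * t) := by
          apply mul_lt_mul_of_pos_right _ hE
          rwa [← dist_eq_norm]
      _ = ε / 2 := by field_simp
  have h2 : S.φ c v t ∈ closure C := by
    rw [hC.2 c hcC]
    exact subset_closure ⟨v, hv, t, ht, rfl⟩
  obtain ⟨c', hc'C, hdist'⟩ := Metric.mem_closure_iff.mp h2 (ε / 2) (by positivity)
  exact ⟨c', hc'C, (dist_triangle _ (S.φ c v t) _).trans_lt (by linarith)⟩

lemma main_aux (S : CAS d m) (M C : Set (Fin d → ℝ)) (hM : S.posInv M)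
    (hC : S.isInvControlSet C) (hCM : C ⊆ M)
    (hH : ∀ x ∈ frontier C ∩ M, (interior (S.reach x)).Nonempty) :
    closure C ∩ M = C := by
  obtain ⟨x₀, hx₀⟩ := hC.1.1
  obtain ⟨v₀, hv₀, -⟩ := hC.1.2.1.1 x₀ hx₀
  have hRC : ∀ x ∈ closure C, S.reach x ⊆ closure C := fun x hx => reach_closure S C hC hx
  have hprops : S.controlSetProps (closure C ∩ M) := by
    refine ⟨?_, ?_⟩
    · intro x hx
      exact ⟨v₀, hv₀, fun t ht => ⟨hRC x hx.1 ⟨v₀, hv₀, t, ht, rfl⟩, hM x hx.2 v₀ hv₀ t ht⟩⟩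
    · intro x hx
      by_cases hxC : x ∈ C
      · intro y hy
        rw [← hC.2 x hxC]
        exact hy.1
      · have hxf : x ∈ frontier C ∩ M :=
          ⟨⟨hx.1, fun hint => hxC (interior_subset hint)⟩, hx.2⟩
        obtain ⟨y₀, hy₀⟩ := hH x hxf
        have hy₀cl : y₀ ∈ closure C := hRC x hx.1 (interior_subset hy₀)
        obtain ⟨c, hcint, hcC⟩ :=
          _root_.mem_closure_iff.mp hy₀cl (interior (S.reach x)) isOpen_interior hy₀
        intro y hy
        have hsub : closure C ⊆ closure (S.reach x) := by
          rw [hC.2 c hcC]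
          exact closure_mono (reach_trans S (interior_subset hcint))
        exact hsub hy.1
  exact hC.1.2.2 (closure C ∩ M) (fun y hy => ⟨subset_closure hy, hCM hy⟩) hprops

theorem stmt2' (S : CAS d m) (M C : Set (Fin d → ℝ))
    (hM : S.posInv M) (hC : S.isInvControlSet C) (hCM : C ⊆ M) :
    ((∀ x ∈ frontier C ∩ M, (interior (S.reach x)).Nonempty) → closure C ∩ M = C) ∧
    ((∀ x ∈ frontier C, (interior (S.reach x)).Nonempty) → IsClosed C) := by
  constructor
  · exact main_aux S M C hM hC hCM
  · intro h
    have := main_aux S Set.univ C (fun x _ v _ t _ => trivial) hC (Set.subset_univ C)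
      (fun x hx => h x hx.1)
    rw [Set.inter_univ] at this
    rw [← this]
    exact isClosed_closure

/-- Let `M` be positively invariant.  An invariant control set
`C ⊆ M` is closed relative to `M` provided the reachable set of every point of
`∂C ∩ M` has nonempty interior; in particular an invariant control set is closed if
the reachable set of every boundary point has nonempty interior. -/
theorem stmt2 {d m : ℕ} (S : CAS d m) (M C : Set (Fin d → ℝ))
    (hM : S.posInv M) (hC : S.isInvControlSet C) (hCM : C ⊆ M) :
    ((∀ x ∈ frontier C ∩ M, (interior (S.reach x)).Nonempty) → closure C ∩ M = C) ∧
    ((∀ x ∈ frontier C, (interior (S.reach x)).Nonempty) → IsClosed C) :=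
  stmt2' S M C hM hC hCM
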